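/- There is a universal constant C such that for every finite poset P on n ≥ 1 elements there exists a weak order W extending P with H(W) ≤ H(P) + 2·log₂(H(P) + 1) + C. -/

import Mathlib

/-- A stable (independent) set of a simple graph, as a `Finset` of vertices. -/
def IsStableSet {V : Type*} (G : SimpleGraph V) (S : Finset V) : Prop :=
  ∀ v ∈ S, ∀ w ∈ S, ¬ G.Adj v w

/-- The stable set polytope `STAB(G)`: the convex hull of characteristic vectors
of stable sets of `G`. -/
noncomputable def STAB {V : Type*} [Fintype V] [DecidableEq V] (G : SimpleGraph V) :
    Set (V → ℝ) :=
  convexHull ℝ {x | ∃ S : Finset V, IsStableSet G S ∧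
    x = fun v => if v ∈ S then (1 : ℝ) else 0}

/-- The (Körner) entropy of a graph `G` on `n` vertices:
`H(G) = min_{x ∈ STAB(G), x > 0} -(1/n) ∑_v log₂ x_v`. -/
noncomputable def graphEntropy {V : Type*} [Fintype V] [DecidableEq V]
    (G : SimpleGraph V) : ℝ :=
  sInf {h : ℝ | ∃ x ∈ STAB G, (∀ v, 0 < x v) ∧
    h = -(1 / (Fintype.card V : ℝ)) * ∑ v, Real.logb 2 (x v)}

/-- The comparability graph of a partial order `P`: distinct `v, w` are adjacent
iff they are comparable in `P`. -/
def compGraph {V : Type*} (P : PartialOrder V) : SimpleGraph V where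
  Adj v w := v ≠ w ∧ (P.le v w ∨ P.le w v)
  symm := ⟨fun v w h => ⟨h.1.symm, h.2.symm⟩⟩
  loopless := ⟨fun v h => h.1 rfl⟩

/-- The entropy of a poset: the entropy of its comparability graph. -/
noncomputable def posetEntropy {V : Type*} [Fintype V] [DecidableEq V]
    (P : PartialOrder V) : ℝ :=
  graphEntropy (compGraph P)

/-- The number `e(P)` of linear extensions of a finite poset `P`, counted as
order-preserving bijections onto `Fin n`. -/
noncomputable def numLinExt {V : Type*} [Fintype V] (P : PartialOrder V) : ℕ :=
  Nat.card {f : V ≃ Fin (Fintype.card V) // ∀ v w : V, P.le v w → f v ≤ f w}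

/-- `W` is a weak order: its ground set is partitioned into layers
`A 0, …, A (k-1)` (necessarily antichains), and `v <_W w` holds exactly when
`v` lies in an earlier layer than `w`. -/
def IsWeakOrder {V : Type*} (W : PartialOrder V) : Prop :=
  ∃ (k : ℕ) (A : Fin k → Finset V),
    (∀ v : V, ∃! i, v ∈ A i) ∧
    (∀ v w : V, W.lt v w ↔ ∃ i j : Fin k, i < j ∧ v ∈ A i ∧ w ∈ A j)

/-- `Q` extends `P`: same ground set, and every relation of `P` holds in `Q`. -/
def Extends {V : Type*} (Q P : PartialOrder V) : Prop :=
  ∀ v w : V, P.le v w → Q.le v w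

open Finset Real


section Basic
variable {n : ℕ}

lemma stab_coords {G : SimpleGraph (Fin n)} {x : Fin n → ℝ} (hx : x ∈ STAB G) :
    ∀ v, 0 ≤ x v ∧ x v ≤ 1 := by
  have h : STAB G ⊆ {y : Fin n → ℝ | ∀ v, 0 ≤ y v ∧ y v ≤ 1} := by
    apply convexHull_min
    · rintro y ⟨S, hS, rfl⟩ v
      by_cases hv : v ∈ S <;> simp [hv]
    · intro y hy z hz a b ha hb hab v
      have h1 := (hy v).1; have h2 := (hy v).2
      have h3 := (hz v).1; have h4 := (hz v).2
      have : (a • y + b • z) v = a * y v + b * z v := by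
        simp [mul_comm]
      rw [this]
      constructor
      · nlinarith
      · nlinarith
  exact h hx

lemma stab_chain_sum {P : PartialOrder (Fin n)} {x : Fin n → ℝ}
    (hx : x ∈ STAB (compGraph P)) (C : Finset (Fin n))
    (hC : ∀ u ∈ C, ∀ w ∈ C, P.le u w ∨ P.le w u) :
    ∑ v ∈ C, x v ≤ 1 := by
  have h : STAB (compGraph P) ⊆ {y : Fin n → ℝ | ∑ v ∈ C, y v ≤ 1} := by
    apply convexHull_min
    · rintro y ⟨S, hS, rfl⟩
      simp only [Set.mem_setOf_eq]
      rw [Finset.sum_boole]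
      rw [show ((1:ℝ)) = ((1:ℕ):ℝ) by norm_num]
      rw [Nat.cast_le]
      rw [Finset.card_le_one]
      intro a ha b hb
      simp only [mem_filter] at ha hb
      by_contra hab
      exact hS a ha.2 b hb.2 ⟨hab, hC a ha.1 b hb.1⟩
    · exact convex_halfSpace_le ⟨fun a b => Finset.sum_add_distrib, fun c y => by
        simp [Finset.mul_sum]⟩ 1
  exact h hx

/-- a layered point is in STAB: given `f`, the point `v ↦ |f⁻¹(f v)|/n` is in
STAB of any graph in which equal-`f` vertices are never adjacent. -/
lemma layered_mem_STAB (hn : 1 ≤ n) {G : SimpleGraph (Fin n)} (f : Fin n → ℝ)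
    (hf : ∀ v w, f v = f w → ¬ G.Adj v w) :
    (fun v => ((univ.filter (fun w => f w = f v)).card : ℝ) / n) ∈ STAB G := by
  classical
  have hmaps : ∀ v : Fin n, v ∈ univ → f v ∈ univ.image f := fun v _ => mem_image_of_mem f (mem_univ v)
  have hmem := Finset.centerMass_mem_convexHull (R := ℝ) (E := Fin n → ℝ)
    (s := {x | ∃ S : Finset (Fin n), IsStableSet G S ∧ x = fun v => if v ∈ S then (1 : ℝ) else 0})
    (t := univ.image f)
    (w := fun t => ((univ.filter (fun w => f w = t)).card : ℝ) / n)
    (fun i _ => by positivity)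
    (by
      have : ∑ t ∈ univ.image f, ((univ.filter (fun w => f w = t)).card : ℝ) / n
          = (∑ t ∈ univ.image f, ((univ.filter (fun w => f w = t)).card : ℝ)) / n := by
        rw [Finset.sum_div]
      rw [this, ← Nat.cast_sum, ← Finset.card_eq_sum_card_fiberwise hmaps]
      simp only [card_univ, Fintype.card_fin]
      positivity)
    (z := fun t => fun v => if v ∈ univ.filter (fun w => f w = t) then (1:ℝ) else 0)
    (fun t _ => ⟨univ.filter (fun w => f w = t), by
      intro a ha b hb
      simp only [mem_filter] at ha hb
      exact hf a b (ha.2.trans hb.2.symm), rfl⟩)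
  unfold STAB
  convert hmem using 1
  rw [Finset.centerMass]
  rw [show ∑ t ∈ univ.image f, ((univ.filter (fun w => f w = t)).card : ℝ) / n = 1 by
    rw [← Finset.sum_div, ← Nat.cast_sum, ← Finset.card_eq_sum_card_fiberwise hmaps]
    simp only [card_univ, Fintype.card_fin]
    field_simp]
  rw [inv_one, one_smul]
  funext v
  rw [Finset.sum_apply]
  rw [Finset.sum_eq_single (f v)]
  · simp [mem_filter]
  · intro t ht htv
    simp only [Pi.smul_apply, mem_filter, mem_univ, true_and, smul_eq_mul]
    rw [if_neg (fun h : f v = t => htv h.symm)]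
    ring
  · intro h; exact absurd (hmaps v (mem_univ v)) h
end Basic


lemma regroup_fiber {V α : Type*} [DecidableEq α] (S : Finset V) (g : V → α) (F : α → ℝ) :
    ∑ v ∈ S, F (g v)
      = ∑ t ∈ S.image g, ((S.filter (fun w => g w = t)).card : ℝ) * F t := by
  rw [← Finset.sum_fiberwise_of_maps_to (fun v hv => mem_image_of_mem g hv) (fun v => F (g v))]
  refine Finset.sum_congr rfl fun t ht => ?_
  rw [Finset.sum_congr rfl (fun v hv => by rw [(Finset.mem_filter.mp hv).2]),
    Finset.sum_const, nsmul_eq_mul]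

lemma entropy_le_cross {V α : Type*} [DecidableEq α] (S : Finset V) (g : V → α) (r : α → ℝ)
    (hr : ∀ v ∈ S, 0 < r (g v)) (hrs : ∑ t ∈ S.image g, r t ≤ 1) :
    ∑ v ∈ S, Real.logb 2 ((S.card : ℝ) / ((S.filter (fun w => g w = g v)).card : ℝ)) ≤
      ∑ v ∈ S, Real.logb 2 (1 / r (g v)) := by
  rcases S.eq_empty_or_nonempty with rfl | hS
  · simp
  have hN : (0:ℝ) < S.card := by exact_mod_cast hS.card_pos
  rw [regroup_fiber S g (fun t => Real.logb 2 ((S.card : ℝ) / ((S.filter (fun w => g w = t)).card : ℝ))),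
      regroup_fiber S g (fun t => Real.logb 2 (1 / r t))]
  have hr' : ∀ t ∈ S.image g, 0 < r t := by
    intro t ht
    obtain ⟨v, hv, rfl⟩ := Finset.mem_image.mp ht
    exact hr v hv
  have hfib : ∀ t ∈ S.image g, (0:ℝ) < ((S.filter (fun w => g w = t)).card : ℝ) := by
    intro t ht
    obtain ⟨v, hv, rfl⟩ := Finset.mem_image.mp ht
    have : v ∈ S.filter (fun w => g w = g v) := Finset.mem_filter.mpr ⟨hv, rfl⟩
    exact_mod_cast Finset.card_pos.mpr ⟨v, this⟩
  have hlog2 : (0:ℝ) < Real.log 2 := Real.log_pos (by norm_num)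
  have key : ∀ t ∈ S.image g,
      ((S.filter (fun w => g w = t)).card : ℝ) * Real.logb 2 ((S.card : ℝ) / ((S.filter (fun w => g w = t)).card : ℝ))
        ≤ ((S.filter (fun w => g w = t)).card : ℝ) * Real.logb 2 (1 / r t)
          + ((S.card : ℝ) * r t - ((S.filter (fun w => g w = t)).card : ℝ)) / Real.log 2 := by
    intro t ht
    set a : ℝ := ((S.filter (fun w => g w = t)).card : ℝ) with ha
    have ha0 : 0 < a := hfib t ht
    have hrt : 0 < r t := hr' t ht
    have h1 : Real.log ((S.card : ℝ) * r t / a) ≤ (S.card : ℝ) * r t / a - 1 :=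
      Real.log_le_sub_one_of_pos (by positivity)
    have h2 : Real.logb 2 ((S.card : ℝ) / a) - Real.logb 2 (1 / r t)
        = Real.log ((S.card : ℝ) * r t / a) / Real.log 2 := by
      rw [Real.logb, Real.logb, div_sub_div_same, ← Real.log_div (by positivity) (by positivity)]
      congr 2
      field_simp
    have h3 : a * (Real.logb 2 ((S.card : ℝ) / a) - Real.logb 2 (1 / r t))
        ≤ ((S.card : ℝ) * r t - a) / Real.log 2 := by
      rw [h2, ← mul_div_assoc]
      apply (div_le_div_iff_of_pos_right hlog2).mpr
      have hexp : a * ((S.card : ℝ) * r t / a) = (S.card : ℝ) * r t := by field_simp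
      nlinarith
    nlinarith
  calc ∑ t ∈ S.image g, ((S.filter (fun w => g w = t)).card : ℝ)
        * Real.logb 2 ((S.card : ℝ) / ((S.filter (fun w => g w = t)).card : ℝ))
      ≤ ∑ t ∈ S.image g, (((S.filter (fun w => g w = t)).card : ℝ) * Real.logb 2 (1 / r t)
          + ((S.card : ℝ) * r t - ((S.filter (fun w => g w = t)).card : ℝ)) / Real.log 2) :=
        Finset.sum_le_sum key
    _ = ∑ t ∈ S.image g, ((S.filter (fun w => g w = t)).card : ℝ) * Real.logb 2 (1 / r t)
        + ((S.card : ℝ) * (∑ t ∈ S.image g, r t) - ∑ t ∈ S.image g, ((S.filter (fun w => g w = t)).card : ℝ)) / Real.log 2 := by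
        rw [Finset.sum_add_distrib]
        congr 1
        rw [← Finset.sum_div]
        congr 1
        rw [Finset.sum_sub_distrib, Finset.mul_sum]
    _ ≤ ∑ t ∈ S.image g, ((S.filter (fun w => g w = t)).card : ℝ) * Real.logb 2 (1 / r t) := by
        have hsum : ∑ t ∈ S.image g, ((S.filter (fun w => g w = t)).card : ℝ) = (S.card : ℝ) := by
          rw [← Nat.cast_sum]
          exact_mod_cast congrArg (Nat.cast (R := ℝ))
            (Finset.card_eq_sum_card_fiberwise (fun v hv => mem_image_of_mem g hv)).symm
        rw [hsum]
        have : (S.card : ℝ) * (∑ t ∈ S.image g, r t) - (S.card : ℝ) ≤ 0 := by nlinarith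
        have := div_nonpos_of_nonpos_of_nonneg this hlog2.le
        linarith


section Construct
open scoped Classical
variable {n : ℕ} (P : PartialOrder (Fin n)) (x : Fin n → ℝ)

def goodChain (v : Fin n) (C : Finset (Fin n)) : Prop :=
  v ∈ C ∧ (∀ u ∈ C, P.le u v) ∧ ∀ u ∈ C, ∀ w ∈ C, P.le u w ∨ P.le w u

noncomputable def chainsTo (v : Fin n) : Finset (Finset (Fin n)) :=
  Finset.univ.filter (goodChain P v)

lemma singleton_mem_chainsTo (v : Fin n) : {v} ∈ chainsTo P v := by
  rw [chainsTo, Finset.mem_filter]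
  refine ⟨Finset.mem_univ _, Finset.mem_singleton_self v, ?_, ?_⟩
  · intro u hu; rw [Finset.mem_singleton] at hu; exact hu ▸ P.le_refl v
  · intro u hu w hw; rw [Finset.mem_singleton] at hu hw; subst hu; subst hw
    exact Or.inl (P.le_refl _)

lemma chainsTo_nonempty (v : Fin n) : (chainsTo P v).Nonempty :=
  ⟨{v}, singleton_mem_chainsTo P v⟩

noncomputable def sfun (v : Fin n) : ℝ :=
  (chainsTo P v).sup' (chainsTo_nonempty P v) (fun C => ∑ u ∈ C, x u)

variable (hchain : ∀ C : Finset (Fin n), (∀ u ∈ C, ∀ w ∈ C, P.le u w ∨ P.le w u) →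
    ∑ u ∈ C, x u ≤ 1)

lemma x_le_sfun (v : Fin n) : x v ≤ sfun P x v := by
  have h := Finset.le_sup' (fun C => ∑ u ∈ C, x u) (singleton_mem_chainsTo P v)
  unfold sfun
  convert h using 1
  · with_unfolding_all rfl
  · simp

include hchain in
lemma sfun_le_one (v : Fin n) : sfun P x v ≤ 1 := by
  apply Finset.sup'_le
  intro C hC
  rw [chainsTo, Finset.mem_filter] at hC
  exact hchain C hC.2.2.2

lemma sfun_add (u v : Fin n) (huv : P.le u v) (hne : u ≠ v) :
    sfun P x u + x v ≤ sfun P x v := by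
  obtain ⟨C, hC, hCeq⟩ := Finset.exists_mem_eq_sup' (chainsTo_nonempty P u)
    (fun C => ∑ u ∈ C, x u)
  rw [chainsTo, Finset.mem_filter] at hC
  obtain ⟨-, hvC, hle, hch⟩ := hC
  have hvnot : v ∉ C := by
    intro hv
    exact hne (P.le_antisymm u v huv (hle v hv))
  have hmem : insert v C ∈ chainsTo P v := by
    rw [chainsTo, Finset.mem_filter]
    refine ⟨Finset.mem_univ _, Finset.mem_insert_self v C, ?_, ?_⟩
    · intro w hw
      rcases Finset.mem_insert.mp hw with h1 | h1
      · exact h1 ▸ P.le_refl v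
      · exact P.le_trans _ _ _ (hle w h1) huv
    · intro a ha b hb
      rcases Finset.mem_insert.mp ha with h1 | h1 <;>
        rcases Finset.mem_insert.mp hb with h2 | h2
      · subst h1; subst h2; exact Or.inl (P.le_refl _)
      · subst h1; exact Or.inr (P.le_trans _ _ _ (hle b h2) huv)
      · subst h2; exact Or.inl (P.le_trans _ _ _ (hle a h1) huv)
      · exact hch a h1 b h2
  have h2 := Finset.le_sup' (fun C => ∑ u ∈ C, x u) hmem
  simp only [Finset.sum_insert hvnot] at h2
  rw [sfun, sfun, hCeq]
  change x v + ∑ u ∈ C, x u ≤ _ at h2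
  linarith

/-- the scale of a vertex -/
noncomputable def mfun (v : Fin n) : ℕ := ⌊Real.logb 2 (1 / x v)⌋₊

/-- the bucket of a vertex -/
noncomputable def qfun (v : Fin n) : ℕ := ⌊sfun P x v * 2 ^ (mfun x v + 1)⌋₊

/-- the level of a vertex -/
noncomputable def ffun (v : Fin n) : ℝ := (qfun P x v : ℝ) / 2 ^ (mfun x v + 1)

variable (hx0 : ∀ v, 0 < x v) (hx1 : ∀ v, x v ≤ 1)

include hx0 in
lemma x_gt (v : Fin n) : 1 / 2 ^ (mfun x v + 1) < x v := by
  have h1 : Real.logb 2 (1 / x v) < ((mfun x v + 1 : ℕ) : ℝ) := by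
    rw [mfun]; push_cast; exact Nat.lt_floor_add_one _
  have h2 : (1 : ℝ) / x v < 2 ^ ((mfun x v + 1 : ℕ) : ℝ) :=
    (Real.logb_lt_iff_lt_rpow (by norm_num) (one_div_pos.mpr (hx0 v))).mp h1
  rw [Real.rpow_natCast] at h2
  have hp : (0:ℝ) < 2 ^ (mfun x v + 1) := by positivity
  rw [div_lt_iff₀ (hx0 v)] at h2
  rw [div_lt_iff₀ hp]
  nlinarith [hx0 v]

include hx0 hx1 in
lemma mfun_le (v : Fin n) : (mfun x v : ℝ) ≤ Real.logb 2 (1 / x v) :=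
  Nat.floor_le (Real.logb_nonneg (by norm_num) (by
    rw [le_div_iff₀ (hx0 v)]; simpa using hx1 v))

include hchain in
lemma qfun_le (v : Fin n) : qfun P x v ≤ 2 ^ (mfun x v + 1) := by
  have h1 : sfun P x v * 2 ^ (mfun x v + 1) ≤ ((2 ^ (mfun x v + 1) : ℕ) : ℝ) := by
    push_cast
    nlinarith [sfun_le_one P x hchain v, pow_pos (show (0:ℝ) < 2 by norm_num) (mfun x v + 1)]
  calc qfun P x v ≤ ⌊((2 ^ (mfun x v + 1) : ℕ) : ℝ)⌋₊ := Nat.floor_mono h1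
    _ = 2 ^ (mfun x v + 1) := Nat.floor_natCast _

include hx0 in
lemma ffun_le_sfun (v : Fin n) : ffun P x v ≤ sfun P x v := by
  have hp : (0:ℝ) < 2 ^ (mfun x v + 1) := by positivity
  rw [ffun, div_le_iff₀ hp]
  exact Nat.floor_le (by nlinarith [x_le_sfun P x v, hx0 v])

include hx0 in
lemma ffun_strictMono (u v : Fin n) (huv : P.le u v) (hne : u ≠ v) :
    ffun P x u < ffun P x v := by
  have hp : (0:ℝ) < 2 ^ (mfun x v + 1) := by positivity
  have h1 : sfun P x u < sfun P x v - 1 / 2 ^ (mfun x v + 1) := by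
    have := sfun_add P x u v huv hne
    have := x_gt x hx0 v
    linarith
  have h2 : sfun P x v - 1 / 2 ^ (mfun x v + 1) < ffun P x v := by
    have hexp : (sfun P x v - 1 / 2 ^ (mfun x v + 1)) * 2 ^ (mfun x v + 1)
        = sfun P x v * 2 ^ (mfun x v + 1) - 1 := by field_simp
    rw [ffun, qfun, lt_div_iff₀ hp, hexp]
    exact Nat.sub_one_lt_floor _
  calc ffun P x u ≤ sfun P x u := ffun_le_sfun P x hx0 u
    _ < ffun P x v := by linarith

end Construct

section WeakOrder
variable {n : ℕ}

def Wof (f : Fin n → ℝ) : PartialOrder (Fin n) where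
  le v w := v = w ∨ f v < f w
  lt v w := (v = w ∨ f v < f w) ∧ ¬ (w = v ∨ f w < f v)
  lt_iff_le_not_ge _ _ := Iff.rfl
  le_refl v := Or.inl rfl
  le_trans a b c := by
    rintro (rfl | h) (rfl | h')
    · exact Or.inl rfl
    · exact Or.inr h'
    · exact Or.inr h
    · exact Or.inr (h.trans h')
  le_antisymm a b h1 h2 := by
    rcases h1 with rfl | h1
    · rfl
    · rcases h2 with rfl | h2
      · rfl
      · exact absurd (h1.trans h2) (lt_irrefl _)

lemma Wof_lt_iff (f : Fin n → ℝ) (v w : Fin n) : (Wof f).lt v w ↔ f v < f w := by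
  constructor
  · rintro ⟨(rfl | h), h2⟩
    · exact absurd (Or.inl rfl) h2
    · exact h
  · intro h
    exact ⟨Or.inr h, by rintro (rfl | h'); exacts [lt_irrefl _ h, lt_irrefl _ (h.trans h')]⟩

lemma Wof_isWeakOrder (f : Fin n → ℝ) :
    ∃ (k : ℕ) (A : Fin k → Finset (Fin n)),
      (∀ v : Fin n, ∃! i, v ∈ A i) ∧
      (∀ v w : Fin n, (Wof f).lt v w ↔ ∃ i j, i < j ∧ v ∈ A i ∧ w ∈ A j) := by
  classical
  set T : Finset ℝ := Finset.univ.image f with hT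
  refine ⟨T.card, fun i => Finset.univ.filter (fun v => f v = (T.orderIsoOfFin rfl i : ℝ)), ?_, ?_⟩
  · intro v
    have hv : f v ∈ T := Finset.mem_image_of_mem f (Finset.mem_univ v)
    refine ⟨(T.orderIsoOfFin rfl).symm ⟨f v, hv⟩, ?_, ?_⟩
    · simp [Finset.mem_filter]
    · intro j hj
      rw [Finset.mem_filter] at hj
      have hval : (T.orderIsoOfFin rfl) j = ⟨f v, hv⟩ := Subtype.ext hj.2.symm
      calc j = (T.orderIsoOfFin rfl).symm ((T.orderIsoOfFin rfl) j) :=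
            (OrderIso.symm_apply_apply _ _).symm
        _ = (T.orderIsoOfFin rfl).symm ⟨f v, hv⟩ := by rw [hval]
  · intro v w
    rw [Wof_lt_iff]
    constructor
    · intro h
      have hv : f v ∈ T := Finset.mem_image_of_mem f (Finset.mem_univ v)
      have hw : f w ∈ T := Finset.mem_image_of_mem f (Finset.mem_univ w)
      refine ⟨(T.orderIsoOfFin rfl).symm ⟨f v, hv⟩, (T.orderIsoOfFin rfl).symm ⟨f w, hw⟩, ?_, ?_, ?_⟩
      · rw [← OrderIso.lt_iff_lt (T.orderIsoOfFin rfl)]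
        simp only [OrderIso.apply_symm_apply]
        exact h
      · simp [Finset.mem_filter]
      · simp [Finset.mem_filter]
    · rintro ⟨i, j, hij, hi, hj⟩
      rw [Finset.mem_filter] at hi hj
      rw [hi.2, hj.2]
      exact (OrderIso.lt_iff_lt (T.orderIsoOfFin rfl)).mpr hij

end WeakOrder

section Steps
open scoped Classical
variable {n : ℕ}


-- abstract versions: m q : Fin n → ℕ with hypotheses, h : ℝ
lemma step3 (m q : Fin n → ℕ) (hq : ∀ v, q v ≤ 2 ^ (m v + 1)) :
    ∑ v : Fin n, Real.logb 2
        (((univ.filter (fun w => m w = m v)).card : ℝ) /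
          ((univ.filter (fun w => m w = m v ∧ q w = q v)).card : ℝ))
      ≤ ∑ v : Fin n, ((m v : ℝ) + 2) := by
  have hmaps : ∀ v : Fin n, v ∈ univ → m v ∈ univ.image m :=
    fun v _ => mem_image_of_mem _ (mem_univ v)
  rw [← Finset.sum_fiberwise_of_maps_to hmaps (fun v => Real.logb 2
        (((univ.filter (fun w => m w = m v)).card : ℝ) /
          ((univ.filter (fun w => m w = m v ∧ q w = q v)).card : ℝ))),
     ← Finset.sum_fiberwise_of_maps_to hmaps (fun v => ((m v : ℝ) + 2))]
  apply Finset.sum_le_sum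
  intro j hj
  have hSj : ∀ v ∈ univ.filter (fun v => m v = j), m v = j :=
    fun v hv => (Finset.mem_filter.mp hv).2
  calc ∑ v ∈ univ.filter (fun v => m v = j), Real.logb 2
          (((univ.filter (fun w => m w = m v)).card : ℝ) /
            ((univ.filter (fun w => m w = m v ∧ q w = q v)).card : ℝ))
      = ∑ v ∈ univ.filter (fun v => m v = j), Real.logb 2
          ((((univ.filter (fun v => m v = j)).card : ℝ)) /
            (((univ.filter (fun v => m v = j)).filter (fun w => q w = q v)).card : ℝ)) := by
        refine Finset.sum_congr rfl fun v hv => ?_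
        have hmv := hSj v hv
        have e1 : univ.filter (fun w => m w = m v) = univ.filter (fun v => m v = j) := by
          rw [hmv]
        have e2 : univ.filter (fun w => m w = m v ∧ q w = q v)
            = (univ.filter (fun v => m v = j)).filter (fun w => q w = q v) := by
          rw [Finset.filter_filter, hmv]
        rw [e1, e2]
    _ ≤ ∑ v ∈ univ.filter (fun v => m v = j), Real.logb 2 (1 / (1 / (2:ℝ) ^ (j + 2))) := by
        apply entropy_le_cross (univ.filter (fun v => m v = j)) q (fun _ => 1 / (2:ℝ) ^ (j + 2))
        · intro v hv; positivity
        · have hsub : (univ.filter (fun v => m v = j)).image q ⊆ Finset.range (2 ^ (j+1) + 1) := by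
            intro t ht
            obtain ⟨v, hv, rfl⟩ := Finset.mem_image.mp ht
            rw [Finset.mem_range, Nat.lt_succ_iff]
            have := hq v
            rwa [hSj v hv] at this
          calc ∑ _t ∈ (univ.filter (fun v => m v = j)).image q, 1 / (2:ℝ) ^ (j + 2)
              = ((univ.filter (fun v => m v = j)).image q).card * (1 / (2:ℝ) ^ (j + 2)) := by
                rw [Finset.sum_const, nsmul_eq_mul]
            _ ≤ ((2 ^ (j+1) + 1 : ℕ) : ℝ) * (1 / (2:ℝ) ^ (j + 2)) := by
                apply mul_le_mul_of_nonneg_right _ (by positivity)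
                have hc := (Finset.card_le_card hsub).trans_eq (Finset.card_range _)
                exact_mod_cast hc
            _ ≤ 1 := by
                rw [mul_one_div, div_le_one (by positivity)]
                push_cast
                have h1 : (1:ℝ) ≤ 2 ^ (j+1) := one_le_pow₀ (by norm_num)
                have h2 : (2:ℝ) ^ (j+2) = 2 ^ (j+1) * 2 := by rw [pow_succ]
                linarith
    _ = ∑ v ∈ univ.filter (fun v => m v = j), ((m v : ℝ) + 2) := by
        refine Finset.sum_congr rfl fun v hv => ?_
        rw [one_div_one_div, hSj v hv, show ((2:ℝ) ^ (j+2)) = (2:ℝ) ^ ((j+2):ℕ) from rfl,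
          Real.logb_pow, Real.logb_self_eq_one (by norm_num)]
        push_cast; ring


lemma step4 (m : Fin n → ℕ) (h : ℝ) (hh : 0 ≤ h) :
    ∑ v : Fin n, Real.logb 2 ((n:ℝ) / ((univ.filter (fun w => m w = m v)).card : ℝ))
      ≤ ∑ v : Fin n, (Real.logb 2 (h + 2) + (m v : ℝ) * Real.logb 2 ((h+2)/(h+1))) := by
  have h1 : (0:ℝ) < h + 1 := by linarith
  have h2 : (0:ℝ) < h + 2 := by linarith
  set θ : ℝ := (h+1)/(h+2) with hθ
  have hθ0 : 0 < θ := by positivity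
  have hθ1 : θ < 1 := by rw [hθ, div_lt_one h2]; linarith
  set r : ℕ → ℝ := fun j => (1/(h+2)) * θ^j with hr
  have hrpos : ∀ j : ℕ, 0 < r j := fun j => by rw [hr]; positivity
  have hcross := entropy_le_cross Finset.univ m r (fun v _ => hrpos _) ?_
  · calc ∑ v : Fin n, Real.logb 2 ((n:ℝ) / ((univ.filter (fun w => m w = m v)).card : ℝ))
        = ∑ v : Fin n, Real.logb 2 (((univ : Finset (Fin n)).card : ℝ) /
            ((univ.filter (fun w => m w = m v)).card : ℝ)) := by
          simp only [card_univ, Fintype.card_fin]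
      _ ≤ ∑ v : Fin n, Real.logb 2 (1 / r (m v)) := hcross
      _ = ∑ v : Fin n, (Real.logb 2 (h + 2) + (m v : ℝ) * Real.logb 2 ((h+2)/(h+1))) := by
          refine Finset.sum_congr rfl fun v _ => ?_
          have ha : h + 1 ≠ 0 := ne_of_gt h1
          have hb : h + 2 ≠ 0 := ne_of_gt h2
          have e0 : (1:ℝ) / (r (m v)) = (h+2) * ((h+2)/(h+1))^(m v) := by
            rw [hr, hθ]
            show (1:ℝ) / (1 / (h + 2) * ((h + 1) / (h + 2)) ^ m v)
              = (h+2) * ((h + 2) / (h + 1)) ^ m v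
            rw [div_pow, div_pow]
            field_simp
          rw [e0, Real.logb_mul (by positivity) (by positivity), Real.logb_pow]
  · -- sum of r over image ≤ 1
    set M : ℕ := (univ.image m).sup id with hM
    have hsub : (univ : Finset (Fin n)).image m ⊆ Finset.range (M + 1) := by
      intro t ht
      rw [Finset.mem_range, Nat.lt_succ_iff]
      exact Finset.le_sup (f := id) ht
    have hmono : ∑ t ∈ (univ : Finset (Fin n)).image m, r t ≤ ∑ t ∈ Finset.range (M+1), r t :=
      Finset.sum_le_sum_of_subset_of_nonneg hsub (fun t _ _ => (hrpos t).le)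
    refine hmono.trans ?_
    rw [hr]
    simp only
    rw [← Finset.mul_sum, geom_sum_eq (by intro hc; rw [hc] at hθ1; exact lt_irrefl _ hθ1)]
    have hθneg : θ - 1 < 0 := by linarith
    have hkey : (θ ^ (M+1) - 1) / (θ - 1) ≤ h + 2 := by
      rw [div_le_iff_of_neg hθneg]
      have hθN : (0:ℝ) ≤ θ^(M+1) := by positivity
      have hexp : (h + 2) * (θ - 1) = -1 := by rw [hθ]; field_simp; ring
      linarith
    calc (1/(h+2)) * ((θ ^ (M+1) - 1) / (θ - 1)) ≤ (1/(h+2)) * (h+2) :=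
        mul_le_mul_of_nonneg_left hkey (by positivity)
      _ = 1 := by field_simp

end Steps

section Count
open scoped Classical
variable {n : ℕ}

lemma count_bound (hn : 1 ≤ n) (P : PartialOrder (Fin n)) (x : Fin n → ℝ)
    (hx0 : ∀ v, 0 < x v)
    (hchain : ∀ C : Finset (Fin n), (∀ u ∈ C, ∀ w ∈ C, P.le u w ∨ P.le w u) →
      ∑ u ∈ C, x u ≤ 1)
    (h : ℝ) (hh : h = 1/(n:ℝ) * ∑ v, Real.logb 2 (1 / x v)) :
    1/(n:ℝ) * ∑ v, Real.logb 2 ((n:ℝ) /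
        ((univ.filter (fun w => ffun P x w = ffun P x v)).card : ℝ))
      ≤ h + 4 + Real.logb 2 (h + 2) := by
  have hn0 : (0:ℝ) < n := by exact_mod_cast hn
  have hx1 : ∀ v, x v ≤ 1 := by
    intro v
    have := hchain {v} (by
      intro u hu w hw; rw [Finset.mem_singleton] at hu hw; subst hu; subst hw
      exact Or.inl (P.le_refl _))
    simpa using this
  have hlog_nonneg : ∀ v, 0 ≤ Real.logb 2 (1 / x v) := fun v =>
    Real.logb_nonneg (by norm_num) (by rw [le_div_iff₀ (hx0 v)]; simpa using hx1 v)
  have hh0 : 0 ≤ h := by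
    rw [hh]
    apply mul_nonneg (by positivity)
    exact Finset.sum_nonneg fun v _ => hlog_nonneg v
  have h1 : (0:ℝ) < h + 1 := by linarith
  have h2 : (0:ℝ) < h + 2 := by linarith
  have hsum_m : ∑ v : Fin n, (mfun x v : ℝ) ≤ (n:ℝ) * h := by
    have hle : ∑ v : Fin n, (mfun x v : ℝ) ≤ ∑ v, Real.logb 2 (1 / x v) :=
      Finset.sum_le_sum (fun v _ => mfun_le x hx0 hx1 v)
    have heq : (n:ℝ) * h = ∑ v, Real.logb 2 (1 / x v) := by
      rw [hh]; field_simp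
    linarith
  -- positivity of the three counts
  have hcpos : ∀ v : Fin n,
      (0:ℝ) < ((univ.filter (fun w => ffun P x w = ffun P x v)).card : ℝ) := by
    intro v
    have : v ∈ univ.filter (fun w => ffun P x w = ffun P x v) :=
      Finset.mem_filter.mpr ⟨Finset.mem_univ v, rfl⟩
    exact_mod_cast Finset.card_pos.mpr ⟨v, this⟩
  have hbpos : ∀ v : Fin n,
      (0:ℝ) < ((univ.filter (fun w => mfun x w = mfun x v ∧ qfun P x w = qfun P x v)).card : ℝ) := by
    intro v
    have : v ∈ univ.filter (fun w => mfun x w = mfun x v ∧ qfun P x w = qfun P x v) :=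
      Finset.mem_filter.mpr ⟨Finset.mem_univ v, rfl, rfl⟩
    exact_mod_cast Finset.card_pos.mpr ⟨v, this⟩
  have hnmpos : ∀ v : Fin n,
      (0:ℝ) < ((univ.filter (fun w => mfun x w = mfun x v)).card : ℝ) := by
    intro v
    have : v ∈ univ.filter (fun w => mfun x w = mfun x v) :=
      Finset.mem_filter.mpr ⟨Finset.mem_univ v, rfl⟩
    exact_mod_cast Finset.card_pos.mpr ⟨v, this⟩
  -- b ≤ c
  have hbc : ∀ v : Fin n,
      ((univ.filter (fun w => mfun x w = mfun x v ∧ qfun P x w = qfun P x v)).card : ℝ)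
        ≤ ((univ.filter (fun w => ffun P x w = ffun P x v)).card : ℝ) := by
    intro v
    have : (univ.filter (fun w => mfun x w = mfun x v ∧ qfun P x w = qfun P x v))
        ⊆ (univ.filter (fun w => ffun P x w = ffun P x v)) := by
      intro w hw
      rw [Finset.mem_filter] at hw ⊢
      refine ⟨hw.1, ?_⟩
      rw [ffun, ffun, hw.2.1, hw.2.2]
    exact_mod_cast Finset.card_le_card this
  -- step 1: replace c by b
  have step1 : ∑ v : Fin n, Real.logb 2 ((n:ℝ) /
        ((univ.filter (fun w => ffun P x w = ffun P x v)).card : ℝ))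
      ≤ ∑ v : Fin n, Real.logb 2 ((n:ℝ) /
        ((univ.filter (fun w => mfun x w = mfun x v ∧ qfun P x w = qfun P x v)).card : ℝ)) := by
    apply Finset.sum_le_sum
    intro v _
    apply (Real.logb_le_logb (by norm_num) (div_pos hn0 (hcpos v)) (div_pos hn0 (hbpos v))).mpr
    exact div_le_div_of_nonneg_left hn0.le (hbpos v) (hbc v)
  have step2 : ∀ v : Fin n, Real.logb 2 ((n:ℝ) /
        ((univ.filter (fun w => mfun x w = mfun x v ∧ qfun P x w = qfun P x v)).card : ℝ))
      = Real.logb 2 ((n:ℝ) / ((univ.filter (fun w => mfun x w = mfun x v)).card : ℝ))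
        + Real.logb 2 (((univ.filter (fun w => mfun x w = mfun x v)).card : ℝ) /
            ((univ.filter (fun w => mfun x w = mfun x v ∧ qfun P x w = qfun P x v)).card : ℝ)) := by
    intro v
    rw [← Real.logb_mul (by
        have := hnmpos v; positivity) (by
        have := hnmpos v; have := hbpos v; positivity)]
    congr 1
    have hb := hbpos v
    have hnm := hnmpos v
    field_simp
  have step3app := step3 (mfun x) (qfun P x) (qfun_le P x hchain)
  have step4app := step4 (mfun x) h hh0
  have hlogθ' : 0 ≤ Real.logb 2 ((h+2)/(h+1)) :=
    Real.logb_nonneg (by norm_num) (by rw [le_div_iff₀ h1]; linarith)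
  have hhlogθ' : h * Real.logb 2 ((h+2)/(h+1)) ≤ 2 := by
    have hln : Real.log ((h+2)/(h+1)) ≤ 1/(h+1) := by
      have hle := Real.log_le_sub_one_of_pos (show (0:ℝ) < (h+2)/(h+1) by positivity)
      have heq : (h+2)/(h+1) - 1 = 1/(h+1) := by field_simp; norm_num
      linarith
    have hlog2 : (1:ℝ)/2 ≤ Real.log 2 := by
      have := Real.log_two_gt_d9; norm_num at this ⊢; linarith
    have hlog2pos : (0:ℝ) < Real.log 2 := Real.log_pos (by norm_num)
    rw [Real.logb, ← mul_div_assoc, div_le_iff₀ hlog2pos]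
    have hfr : h * (1/(h+1)) ≤ 1 := by
      rw [mul_one_div, div_le_one h1]; linarith
    nlinarith [hln, hh0, hfr, hlog2]
  have total : ∑ v : Fin n, Real.logb 2 ((n:ℝ) /
        ((univ.filter (fun w => ffun P x w = ffun P x v)).card : ℝ))
      ≤ (n:ℝ) * (h + 4 + Real.logb 2 (h+2)) := by
    calc ∑ v : Fin n, Real.logb 2 ((n:ℝ) /
          ((univ.filter (fun w => ffun P x w = ffun P x v)).card : ℝ))
        ≤ ∑ v : Fin n, Real.logb 2 ((n:ℝ) /
          ((univ.filter (fun w => mfun x w = mfun x v ∧ qfun P x w = qfun P x v)).card : ℝ)) := step1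
      _ = ∑ v : Fin n, Real.logb 2 ((n:ℝ) / ((univ.filter (fun w => mfun x w = mfun x v)).card : ℝ))
          + ∑ v : Fin n, Real.logb 2 (((univ.filter (fun w => mfun x w = mfun x v)).card : ℝ) /
              ((univ.filter (fun w => mfun x w = mfun x v ∧ qfun P x w = qfun P x v)).card : ℝ)) := by
          rw [← Finset.sum_add_distrib]
          exact Finset.sum_congr rfl fun v _ => step2 v
      _ ≤ (∑ v : Fin n, (Real.logb 2 (h + 2) + (mfun x v : ℝ) * Real.logb 2 ((h+2)/(h+1))))
          + ∑ v : Fin n, ((mfun x v : ℝ) + 2) := add_le_add step4app step3app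
      _ = (n:ℝ) * Real.logb 2 (h+2)
          + (∑ v : Fin n, (mfun x v : ℝ)) * Real.logb 2 ((h+2)/(h+1))
          + ((∑ v : Fin n, (mfun x v : ℝ)) + 2*(n:ℝ)) := by
          rw [Finset.sum_add_distrib, Finset.sum_add_distrib, Finset.sum_const, Finset.sum_const,
            ← Finset.sum_mul]
          simp only [card_univ, Fintype.card_fin, nsmul_eq_mul, mul_one]
          ring
      _ ≤ (n:ℝ) * (h + 4 + Real.logb 2 (h+2)) := by
          have e1 : (∑ v : Fin n, (mfun x v : ℝ)) * Real.logb 2 ((h+2)/(h+1))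
              ≤ ((n:ℝ)*h) * Real.logb 2 ((h+2)/(h+1)) :=
            mul_le_mul_of_nonneg_right hsum_m hlogθ'
          have e2 : ((n:ℝ)*h) * Real.logb 2 ((h+2)/(h+1)) ≤ (n:ℝ) * 2 := by
            nlinarith [hhlogθ', hn0]
          linarith [hsum_m]
  calc 1/(n:ℝ) * ∑ v : Fin n, Real.logb 2 ((n:ℝ) /
        ((univ.filter (fun w => ffun P x w = ffun P x v)).card : ℝ))
      ≤ 1/(n:ℝ) * ((n:ℝ) * (h + 4 + Real.logb 2 (h+2))) :=
        mul_le_mul_of_nonneg_left total (by positivity)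
    _ = h + 4 + Real.logb 2 (h+2) := by field_simp
end Count

section Entropy
variable {n : ℕ}

/-- every element of the defining set of `graphEntropy` is nonnegative -/
lemma entropySet_nonneg (hn : 1 ≤ n) (G : SimpleGraph (Fin n)) :
    ∀ a ∈ {h : ℝ | ∃ x ∈ STAB G, (∀ v, 0 < x v) ∧
      h = -(1 / (Fintype.card (Fin n) : ℝ)) * ∑ v, Real.logb 2 (x v)}, 0 ≤ a := by
  rintro a ⟨x, hxS, hx0, rfl⟩
  have hsum : ∑ v, Real.logb 2 (x v) ≤ 0 := by
    apply Finset.sum_nonpos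
    intro v _
    exact Real.logb_nonpos (by norm_num) (hx0 v).le (stab_coords hxS v).2
  have hcard : (0:ℝ) < (Fintype.card (Fin n) : ℝ) := by
    simp only [Fintype.card_fin]; exact_mod_cast hn
  have : 0 ≤ 1 / (Fintype.card (Fin n) : ℝ) := by positivity
  nlinarith

lemma entropySet_nonempty (hn : 1 ≤ n) (G : SimpleGraph (Fin n)) :
    {h : ℝ | ∃ x ∈ STAB G, (∀ v, 0 < x v) ∧
      h = -(1 / (Fintype.card (Fin n) : ℝ)) * ∑ v, Real.logb 2 (x v)}.Nonempty := by
  classical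
  set f : Fin n → ℝ := fun v => ((v : ℕ) : ℝ) with hf
  have hinj : ∀ v w : Fin n, f v = f w → v = w := by
    intro v w hvw
    simp only [hf] at hvw
    exact Fin.ext (by exact_mod_cast hvw)
  have hmem := layered_mem_STAB hn (G := G) f (fun v w hvw hadj => hadj.ne (hinj v w hvw))
  refine ⟨_, _, hmem, fun v => ?_, rfl⟩
  have : v ∈ Finset.univ.filter (fun w => f w = f v) :=
    Finset.mem_filter.mpr ⟨Finset.mem_univ v, rfl⟩
  have hc : 0 < ((Finset.univ.filter (fun w => f w = f v)).card : ℝ) :=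
    by exact_mod_cast Finset.card_pos.mpr ⟨v, this⟩
  have hn0 : (0:ℝ) < (n:ℝ) := by exact_mod_cast hn
  positivity

lemma posetEntropy_Wof_le (hn : 1 ≤ n) (f : Fin n → ℝ) :
    posetEntropy (Wof f) ≤
      1/(n:ℝ) * ∑ v, Real.logb 2 ((n:ℝ) /
        ((Finset.univ.filter (fun w => f w = f v)).card : ℝ)) := by
  classical
  have hn0 : (0:ℝ) < (n:ℝ) := by exact_mod_cast hn
  have hstable : ∀ v w : Fin n, f v = f w → ¬ (compGraph (Wof f)).Adj v w := by
    intro v w hvw hadj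
    obtain ⟨hne, hle⟩ := hadj
    rcases hle with h | h
    · rcases h with rfl | h
      · exact hne rfl
      · rw [hvw] at h; exact lt_irrefl _ h
    · rcases h with h | h
      · exact hne h.symm
      · rw [hvw] at h; exact lt_irrefl _ h
  have hmem := layered_mem_STAB hn (G := compGraph (Wof f)) f hstable
  have hcpos : ∀ v : Fin n, (0:ℝ) < ((Finset.univ.filter (fun w => f w = f v)).card : ℝ) := by
    intro v
    have : v ∈ Finset.univ.filter (fun w => f w = f v) :=
      Finset.mem_filter.mpr ⟨Finset.mem_univ v, rfl⟩
    exact_mod_cast Finset.card_pos.mpr ⟨v, this⟩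
  have hval : -(1 / (Fintype.card (Fin n) : ℝ)) * ∑ v, Real.logb 2
        ((((Finset.univ.filter (fun w => f w = f v)).card : ℝ)) / (n:ℝ))
      = 1/(n:ℝ) * ∑ v, Real.logb 2 ((n:ℝ) /
        ((Finset.univ.filter (fun w => f w = f v)).card : ℝ)) := by
    simp only [Fintype.card_fin]
    have e : ∀ v : Fin n, Real.logb 2 ((((Finset.univ.filter (fun w => f w = f v)).card : ℝ)) / (n:ℝ))
        = - Real.logb 2 ((n:ℝ) / ((Finset.univ.filter (fun w => f w = f v)).card : ℝ)) := by
      intro v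
      rw [Real.logb_div (ne_of_gt (hcpos v)) (ne_of_gt hn0),
        Real.logb_div (ne_of_gt hn0) (ne_of_gt (hcpos v))]
      ring
    rw [Finset.sum_congr rfl (fun v _ => e v), Finset.sum_neg_distrib]
    ring
  have hbdd : BddBelow {h : ℝ | ∃ x ∈ STAB (compGraph (Wof f)), (∀ v, 0 < x v) ∧
      h = -(1 / (Fintype.card (Fin n) : ℝ)) * ∑ v, Real.logb 2 (x v)} :=
    ⟨0, fun a ha => entropySet_nonneg hn _ a ha⟩
  unfold posetEntropy graphEntropy
  exact csInf_le hbdd ⟨_, hmem, fun v => div_pos (hcpos v) hn0, hval.symm⟩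
end Entropy

/-- There is a universal constant `C` such that every finite poset `P` on `n ≥ 1`
elements admits a weak order extension `W` with
`H(W) ≤ H(P) + 2·log₂(H(P) + 1) + C`. -/
theorem exists_weakOrder_extension_entropy_log :
    ∃ C : ℝ, ∀ (n : ℕ), 1 ≤ n → ∀ P : PartialOrder (Fin n),
      ∃ W : PartialOrder (Fin n), IsWeakOrder W ∧ Extends W P ∧
        posetEntropy W ≤
          posetEntropy P + 2 * Real.logb 2 (posetEntropy P + 1) + C := by
  classical
  refine ⟨7, ?_⟩
  intro n hn P
  have hne := entropySet_nonempty hn (compGraph P)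
  have hlb := entropySet_nonneg hn (compGraph P)
  have hEq : posetEntropy P = sInf {h : ℝ | ∃ x ∈ STAB (compGraph P), (∀ v, 0 < x v) ∧
      h = -(1 / (Fintype.card (Fin n) : ℝ)) * ∑ v, Real.logb 2 (x v)} := rfl
  have hH0 : 0 ≤ posetEntropy P := by
    rw [hEq]
    exact le_csInf hne hlb
  obtain ⟨a, haS, halt⟩ := Real.lt_sInf_add_pos hne one_pos
  rw [← hEq] at halt
  obtain ⟨x, hxS, hx0, hav⟩ := haS
  have ha0 : 0 ≤ a := hlb a ⟨x, hxS, hx0, hav⟩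
  have hn0 : (0:ℝ) < (n:ℝ) := by exact_mod_cast hn
  have hchain : ∀ C : Finset (Fin n), (∀ u ∈ C, ∀ w ∈ C, P.le u w ∨ P.le w u) →
      ∑ u ∈ C, x u ≤ 1 := fun C hC => stab_chain_sum hxS C hC
  have hhval : a = 1/(n:ℝ) * ∑ v, Real.logb 2 (1 / x v) := by
    rw [hav]
    simp only [Fintype.card_fin]
    have e : ∑ v : Fin n, Real.logb 2 (1 / x v) = ∑ v : Fin n, -Real.logb 2 (x v) :=
      Finset.sum_congr rfl (fun v _ => by rw [one_div, Real.logb_inv])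
    rw [e, Finset.sum_neg_distrib]
    ring
  refine ⟨Wof (ffun P x), Wof_isWeakOrder (ffun P x), ?_, ?_⟩
  · intro v w hvw
    by_cases hvw' : v = w
    · exact Or.inl hvw'
    · exact Or.inr (ffun_strictMono P x hx0 v w hvw hvw')
  · have hb1 := posetEntropy_Wof_le hn (ffun P x)
    have hb2 := count_bound hn P x hx0 hchain a hhval
    set H := posetEntropy P with hHdef
    have harith : a + 4 + Real.logb 2 (a + 2) ≤ H + 2 * Real.logb 2 (H + 1) + 7 := by
      have l1 : Real.logb 2 (a+2) ≤ Real.logb 2 (H+3) :=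
        (Real.logb_le_logb (by norm_num) (by linarith) (by linarith)).mpr (by linarith)
      have l2 : Real.logb 2 (H+3) ≤ Real.logb 2 (4*(H+1)) :=
        (Real.logb_le_logb (by norm_num) (by linarith) (by linarith)).mpr (by linarith)
      have l3 : Real.logb 2 (4*(H+1)) = 2 + Real.logb 2 (H+1) := by
        rw [Real.logb_mul (by norm_num) (by positivity), show (4:ℝ) = 2^(2:ℕ) by norm_num,
          Real.logb_pow, Real.logb_self_eq_one (by norm_num)]
        push_cast
        ring
      have l4 : 0 ≤ Real.logb 2 (H+1) := Real.logb_nonneg (by norm_num) (by linarith)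
      linarith
    linarith [hb1, hb2]
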